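/- If M is a symmetric positive definite real n×n matrix, then there exists a lower triangular matrix L with positive diagonal entries such that M = L * Lᵀ (Cholesky decomposition). -/

import Mathlib

open Matrix

theorem cholesky_aux {m : Type*} [Fintype m] [LinearOrder m] [WellFoundedLT m]
    [LocallyFiniteOrderBot m] (M : Matrix m m ℝ) (hM : M.PosDef) :
    ∃ L : Matrix m m ℝ,
      (∀ i j : m, i < j → L i j = 0) ∧ (∀ i : m, 0 < L i i) ∧ M = L * Lᵀ := by
  classical
  have hpos : ∀ x : m → ℝ, x ≠ 0 → 0 < x ⬝ᵥ M.mulVec x := by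
    intro x hx
    simpa using hM.dotProduct_mulVec_pos hx
  haveI := LDL.invertibleLowerInv hM
  set A := LDL.lowerInv hM with hA
  set L₀ := LDL.lower hM with hL₀
  have hAtri : A.BlockTriangular OrderDual.toDual := fun i j h =>
    LDL.lowerInv_triangular hM h
  have hL₀tri : L₀.BlockTriangular OrderDual.toDual :=
    blockTriangular_inv_of_blockTriangular hAtri
  -- diagonal entries of A are nonzero
  have hAdet : A.det ≠ 0 := IsUnit.ne_zero (isUnit_det_of_invertible A)
  have hAdiag : ∀ i, A i i ≠ 0 := by
    intro i hi
    apply hAdet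
    rw [det_of_lowerTriangular A hAtri]
    exact Finset.prod_eq_zero (Finset.mem_univ i) hi
  -- rows of A are nonzero
  have hArow : ∀ i, A i ≠ 0 := by
    intro i h
    exact hAdiag i (by simpa using congrFun h i)
  -- positivity of the LDL diagonal entries
  have hd : ∀ i, 0 < LDL.diagEntries hM i := by
    intro i
    have h1 : LDL.diag hM i i = A i ⬝ᵥ M.mulVec (A i) := by
      rw [LDL.diag_eq_lowerInv_conj hM]
      simp only [mul_apply, conjTranspose_apply, dotProduct, mulVec, dotProduct,
        Finset.sum_mul, Finset.mul_sum, star_trivial]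
      rw [Finset.sum_comm]
      congr 1; ext k; congr 1; ext j; ring
    have h2 : LDL.diag hM i i = LDL.diagEntries hM i := by
      simp [LDL.diag]
    rw [← h2, h1]
    exact hpos _ (hArow i)
  -- diagonal entries of L₀ are nonzero
  have hL₀det : L₀.det ≠ 0 := by
    rw [hL₀, LDL.lower, det_nonsing_inv, Ring.inverse_eq_inv]
    exact inv_ne_zero hAdet
  have hL₀diag : ∀ i, L₀ i i ≠ 0 := by
    intro i hi
    apply hL₀det
    rw [det_of_lowerTriangular L₀ hL₀tri]
    exact Finset.prod_eq_zero (Finset.mem_univ i) hi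
  -- define the Cholesky factor
  set c : m → ℝ := fun i =>
    if 0 < L₀ i i then Real.sqrt (LDL.diagEntries hM i) else -Real.sqrt (LDL.diagEntries hM i)
    with hc
  have hcc : ∀ i, c i * c i = LDL.diagEntries hM i := by
    intro i
    have := Real.mul_self_sqrt (le_of_lt (hd i))
    by_cases h : 0 < L₀ i i <;> simp [hc, h, this, neg_mul_neg]
  refine ⟨L₀ * diagonal c, ?_, ?_, ?_⟩
  · intro i j hij
    rw [mul_diagonal]
    have : L₀ i j = 0 := hL₀tri (by exact_mod_cast hij)
    simp [this]
  · intro i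
    rw [mul_diagonal]
    rcases lt_trichotomy (L₀ i i) 0 with h | h | h
    · have hcneg : c i = -Real.sqrt (LDL.diagEntries hM i) := by
        simp [hc, not_lt.mpr (le_of_lt h)]
      rw [hcneg]
      have : 0 < Real.sqrt (LDL.diagEntries hM i) := Real.sqrt_pos.mpr (hd i)
      nlinarith
    · exact absurd h (hL₀diag i)
    · have hcpos : c i = Real.sqrt (LDL.diagEntries hM i) := by simp [hc, h]
      rw [hcpos]
      exact mul_pos h (Real.sqrt_pos.mpr (hd i))
  · have key := LDL.lower_conj_diag hM
    have hct : (L₀ * diagonal c)ᵀ = diagonal c * L₀ᵀ := by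
      rw [transpose_mul, diagonal_transpose]
    rw [hct, ← Matrix.mul_assoc, Matrix.mul_assoc L₀, diagonal_mul_diagonal]
    have hdc : (diagonal fun i => c i * c i) = LDL.diag hM := by
      ext i j
      by_cases h : i = j <;> simp [h, LDL.diag, hcc, diagonal]
    rw [hdc]
    have hTT : (LDL.lower hM)ᴴ = L₀ᵀ := by
      rw [conjTranspose]
      ext i j
      simp [hL₀]
    rw [← hTT, ← hL₀]
    exact key.symm

/-- Cholesky decomposition: a symmetric positive definite real matrix `M` can be
written as `L * Lᵀ` with `L` lower triangular with positive diagonal entries. -/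
theorem cholesky_decomposition {n : ℕ} (M : Matrix (Fin n) (Fin n) ℝ)
    (hsymm : Mᵀ = M)
    (hpos : ∀ x : Fin n → ℝ, x ≠ 0 → 0 < x ⬝ᵥ M.mulVec x) :
    ∃ L : Matrix (Fin n) (Fin n) ℝ,
      (∀ i j : Fin n, i < j → L i j = 0) ∧ (∀ i : Fin n, 0 < L i i) ∧ M = L * Lᵀ := by
  have hM : M.PosDef := by
    refine Matrix.PosDef.of_dotProduct_mulVec_pos ?_ ?_
    · show Mᴴ = M
      simpa using hsymm
    · intro x hx
      simpa using hpos x hx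
  exact @cholesky_aux (Fin n) _ Fin.instLinearOrder
    (inferInstanceAs (WellFoundedLT (Fin n)))
    (inferInstanceAs (LocallyFiniteOrderBot (Fin n))) M hM
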